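/- There is an absolute constant C ∈ (0,∞) with the following property. Let (Ω, 𝓕, P) be a probability space, k ≥ 1, and for each j = 1,…,k let (ξ_i^{(j)})_{i ≥ 1} be a sequence of independent, identically distributed, centered (mean-zero) real random variables; write ξ^{(j)} := ξ_1^{(j)} and S_n(j) := n^{−1/2} Σ_{i=1}^n ξ_i^{(j)}. Let p_1,…,p_k ≥ 2 and a_1,…,a_k > 1 with Σ_{j=1}^k 1/a_j = 1, and assume E|ξ^{(j)}|^{a_j p_j} < ∞ for each j. Then for every n ≥ 1 and every u > 0, P( min_{1 ≤ j ≤ k} |S_n(j)| > u ) ≤ u^{−Σ_{j=1}^k p_j} · ∏_{j=1}^k [ C · (a_j p_j / ln(a_j p_j)) · ( E|ξ^{(j)}|^{a_j p_j} )^{1/(a_j p_j)} ]^{p_j}. -/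

import Mathlib

open MeasureTheory ProbabilityTheory Set Filter
open scoped ENNReal

/-- Young-type: `a^(x-r) * c^r ≤ a^x + c^x`. -/
lemma aux_W {a c x r : ℝ} (ha : 0 ≤ a) (hc : 0 ≤ c) (hr : 0 ≤ r) (hrx : r ≤ x)
    (hx : 0 < x) : a ^ (x - r) * c ^ r ≤ a ^ x + c ^ x := by
  set M := max a c with hM
  have hMa : a ≤ M := le_max_left _ _
  have hMc : c ≤ M := le_max_right _ _
  have hM0 : 0 ≤ M := le_trans ha hMa
  have h1 : a ^ (x - r) * c ^ r ≤ M ^ (x - r) * M ^ r :=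
    mul_le_mul (Real.rpow_le_rpow ha hMa (by linarith))
      (Real.rpow_le_rpow hc hMc hr) (Real.rpow_nonneg hc r) (Real.rpow_nonneg hM0 _)
  have h2 : M ^ (x - r) * M ^ r = M ^ x := by
    rw [← Real.rpow_add' hM0 (by rw [sub_add_cancel]; exact hx.ne')]
    ring_nf
  rw [h2] at h1
  refine h1.trans ?_
  rcases max_choice a c with h | h <;> rw [hM, h]
  · exact le_add_of_nonneg_right (Real.rpow_nonneg hc x)
  · exact le_add_of_nonneg_left (Real.rpow_nonneg ha x)

/-- Splitting: `(u+v)^p ≤ (1+δ)^p u^p + (1+δ⁻¹)^p v^p`. -/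
lemma aux_split {u v p δ : ℝ} (hu : 0 ≤ u) (hv : 0 ≤ v) (hp : 0 ≤ p) (hδ : 0 < δ) :
    (u + v) ^ p ≤ (1 + δ) ^ p * u ^ p + (1 + δ⁻¹) ^ p * v ^ p := by
  rcases le_or_gt v (δ * u) with h | h
  · have h1 : u + v ≤ (1 + δ) * u := by nlinarith
    calc (u + v) ^ p ≤ ((1 + δ) * u) ^ p :=
          Real.rpow_le_rpow (by linarith) h1 hp
    _ = (1 + δ) ^ p * u ^ p := Real.mul_rpow (by linarith) hu
    _ ≤ _ := le_add_of_nonneg_right (by positivity)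
  · have h1 : u + v ≤ (1 + δ⁻¹) * v := by
      have h2 : δ * u ≤ δ * (δ⁻¹ * v) := by
        rw [← mul_assoc, mul_inv_cancel₀ hδ.ne', one_mul]; exact h.le
      have h3 : u ≤ δ⁻¹ * v := le_of_mul_le_mul_left h2 hδ
      nlinarith
    calc (u + v) ^ p ≤ ((1 + δ⁻¹) * v) ^ p :=
          Real.rpow_le_rpow (by linarith) h1 hp
    _ = (1 + δ⁻¹) ^ p * v ^ p := Real.mul_rpow (by positivity) hv
    _ ≤ _ := le_add_of_nonneg_left (by positivity)

/-- The derivative of `ψ t = t * |t|^(x-2)`. -/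
lemma aux_hasDerivAt_psi {x : ℝ} (hx : 2 ≤ x) (t : ℝ) :
    HasDerivAt (fun t : ℝ => t * |t| ^ (x - 2)) ((x - 1) * |t| ^ (x - 2)) t := by
  rcases lt_trichotomy t 0 with ht | ht | ht
  · -- t < 0 : function equals -(-t)^(x-1) near t
    have h1 : HasDerivAt (fun s : ℝ => -((-s) ^ (x - 1))) ((x - 1) * (-t) ^ (x - 2)) t := by
      have h0 : HasDerivAt (fun s : ℝ => (-s : ℝ)) (-1) t := (hasDerivAt_id t).neg
      have h2 : HasDerivAt (fun u : ℝ => u ^ (x - 1)) ((x - 1) * (-t) ^ (x - 1 - 1)) (-t) :=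
        Real.hasDerivAt_rpow_const (Or.inl (by linarith))
      have := (h2.comp t h0).neg
      exact this.congr_deriv (by rw [show x - 1 - 1 = x - 2 by ring]; ring)
    have heq : (fun s : ℝ => s * |s| ^ (x - 2)) =ᶠ[nhds t] fun s => -((-s) ^ (x - 1)) := by
      filter_upwards [Iio_mem_nhds ht] with s hs
      have hs' : (0:ℝ) < -s := by simpa using hs
      rw [abs_of_neg (by simpa using hs)]
      have : (-s) ^ (x - 1) = (-s) ^ (1 : ℝ) * (-s) ^ (x - 2) := by
        rw [← Real.rpow_add hs']; ring_nf
      rw [this, Real.rpow_one]; ring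
    rw [abs_of_neg ht]
    exact h1.congr_of_eventuallyEq heq
  · -- t = 0
    subst ht
    rcases eq_or_lt_of_le hx with h2 | h2
    · -- x = 2 : function is t * |t|^0 = t
      have heq : (fun s : ℝ => s * |s| ^ (x - 2)) = fun s : ℝ => s := by
        funext s; rw [← h2]; simp
      rw [heq]
      refine (hasDerivAt_id (0:ℝ)).congr_deriv ?_
      rw [← h2]; norm_num
    · -- x > 2
      rw [abs_zero, Real.zero_rpow (by linarith), mul_zero]
      rw [hasDerivAt_iff_tendsto_slope]
      have heq : slope (fun s : ℝ => s * |s| ^ (x - 2)) 0 =ᶠ[nhdsWithin 0 {(0:ℝ)}ᶜ]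
          fun s => |s| ^ (x - 2) := by
        filter_upwards [self_mem_nhdsWithin] with s hs
        have hs0 : s ≠ 0 := hs
        rw [slope_def_field]
        field_simp
        simp only [zero_mul, sub_zero]; ring
      rw [Filter.tendsto_congr' heq]
      have hcont : Tendsto (fun s : ℝ => |s| ^ (x - 2)) (nhds 0) (nhds (|0| ^ (x - 2))) := by
        apply ContinuousAt.tendsto
        exact (Real.continuousAt_rpow_const _ _ (Or.inr (by linarith))).comp
          continuous_abs.continuousAt
      rw [abs_zero, Real.zero_rpow (by linarith)] at hcont
      exact hcont.mono_left nhdsWithin_le_nhds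
  · -- t > 0
    have h1 : HasDerivAt (fun s : ℝ => s ^ (x - 1)) ((x - 1) * t ^ (x - 2)) t := by
      have := Real.hasDerivAt_rpow_const (p := x - 1) (Or.inl ht.ne')
      convert this using 2; ring_nf
    have heq : (fun s : ℝ => s * |s| ^ (x - 2)) =ᶠ[nhds t] fun s => s ^ (x - 1) := by
      filter_upwards [Ioi_mem_nhds ht] with s hs
      have hs' : (0:ℝ) < s := hs
      rw [abs_of_pos hs']
      have : s ^ (x - 1) = s ^ (1 : ℝ) * s ^ (x - 2) := by
        rw [← Real.rpow_add hs']; ring_nf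
      rw [this, Real.rpow_one]
    rw [abs_of_pos ht]
    exact h1.congr_of_eventuallyEq heq

/-- MVT bound for `ψ t = t·|t|^(x-2)`. -/
lemma aux_psi {x : ℝ} (hx : 2 ≤ x) (a b : ℝ) :
    |(a + b) * |a + b| ^ (x - 2) - a * |a| ^ (x - 2)| ≤
      (x - 1) * (|a| + |b|) ^ (x - 2) * |b| := by
  set C := (x - 1) * (|a| + |b|) ^ (x - 2) with hC
  have key : ∀ t ∈ uIcc a (a + b), ‖(x - 1) * |t| ^ (x - 2)‖ ≤ C := by
    intro t ht
    rw [Real.norm_eq_abs, abs_mul, abs_of_nonneg (by linarith : (0:ℝ) ≤ x - 1),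
      abs_of_nonneg (Real.rpow_nonneg (abs_nonneg t) _)]
    have htle : |t| ≤ |a| + |b| := by
      rcases Set.mem_uIcc.mp ht with ⟨h1, h2⟩ | ⟨h1, h2⟩ <;>
        exact abs_le.mpr ⟨by linarith [neg_abs_le a, neg_abs_le (a+b), abs_nonneg b, abs_add_le a b],
          by linarith [le_abs_self a, le_abs_self (a+b), abs_nonneg b, abs_add_le a b]⟩
    exact mul_le_mul_of_nonneg_left
      (Real.rpow_le_rpow (abs_nonneg t) htle (by linarith)) (by linarith)
  have := Convex.norm_image_sub_le_of_norm_hasDerivWithin_le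
    (f := fun t : ℝ => t * |t| ^ (x - 2)) (f' := fun t => (x - 1) * |t| ^ (x - 2))
    (s := uIcc a (a + b))
    (fun t _ => (aux_hasDerivAt_psi hx t).hasDerivWithinAt) key (convex_uIcc _ _)
    left_mem_uIcc right_mem_uIcc
  rw [Real.norm_eq_abs, Real.norm_eq_abs] at this
  simpa using this
open MeasureTheory ProbabilityTheory Set Filter
open scoped ENNReal

lemma aux_meas_absrpow {Ω : Type} [MeasurableSpace Ω] {Z : Ω → ℝ} (hZ : Measurable Z)
    (r : ℝ) : Measurable fun ω => |Z ω| ^ r :=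
  (measurable_id.comp' hZ.abs).pow_const r

/-- integrability of lower powers -/
lemma aux_int_rpow {Ω : Type} [MeasurableSpace Ω] {P : Measure Ω} [IsProbabilityMeasure P]
    {Z : Ω → ℝ} (hZ : Measurable Z) {r s : ℝ} (hr : 0 ≤ r) (hrs : r ≤ s)
    (hint : Integrable (fun ω => |Z ω| ^ s) P) :
    Integrable (fun ω => |Z ω| ^ r) P := by
  refine Integrable.mono' ((integrable_const 1).add hint)
    (aux_meas_absrpow hZ r).aestronglyMeasurable ?_
  filter_upwards with ω
  simp only [Pi.add_apply]
  rw [Real.norm_eq_abs, abs_of_nonneg (Real.rpow_nonneg (abs_nonneg _) _)]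
  rcases le_total (|Z ω|) 1 with h | h
  · have := Real.rpow_le_one (abs_nonneg _) h hr
    have := Real.rpow_nonneg (abs_nonneg (Z ω)) s
    linarith
  · have := Real.rpow_le_rpow_of_exponent_le h hrs
    linarith

/-- Lyapunov inequality on a probability space. -/
lemma aux_lyapunov {Ω : Type} [MeasurableSpace Ω] {P : Measure Ω} [IsProbabilityMeasure P]
    {Z : Ω → ℝ} (hZ : Measurable Z) {r s : ℝ} (hr : 0 ≤ r) (hrs : r ≤ s) (hs : 0 < s)
    (hint : Integrable (fun ω => |Z ω| ^ s) P) :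
    ∫ ω, |Z ω| ^ r ∂P ≤ (∫ ω, |Z ω| ^ s ∂P) ^ (r / s) := by
  rcases eq_or_lt_of_le hr with hr0 | hr0
  · simp only [← hr0, Real.rpow_zero]
    simp
  rcases eq_or_lt_of_le hrs with hrs0 | hrs0
  · subst hrs0
    rw [div_self hs.ne', Real.rpow_one]
  -- now 0 < r < s
  have hconj : Real.HolderConjugate (s / r) (s / (s - r)) := by
    refine Real.holderConjugate_iff.mpr ⟨?_, ?_⟩
    · rw [lt_div_iff₀ hr0]; linarith
    · rw [inv_div, inv_div, ← add_div, show r + (s - r) = s by ring, div_self hs.ne']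
  have hf : AEMeasurable (fun ω => ENNReal.ofReal (|Z ω| ^ r)) P :=
    (ENNReal.measurable_ofReal.comp (aux_meas_absrpow hZ r)).aemeasurable
  have key := ENNReal.lintegral_mul_le_Lp_mul_Lq P hconj hf (aemeasurable_const (b := (1:ℝ≥0∞)))
  simp only [Pi.mul_apply, mul_one, ENNReal.one_rpow, lintegral_const, measure_univ, one_mul,
    ENNReal.one_rpow, mul_one] at key
  have hpow : ∀ ω, (ENNReal.ofReal (|Z ω| ^ r)) ^ (s / r) = ENNReal.ofReal (|Z ω| ^ s) := by
    intro ω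
    rw [ENNReal.ofReal_rpow_of_nonneg (Real.rpow_nonneg (abs_nonneg _) _) (by positivity),
      ← Real.rpow_mul (abs_nonneg _)]
    congr 1
    field_simp
  simp only [hpow] at key
  rw [← ofReal_integral_eq_lintegral_ofReal (aux_int_rpow hZ hr hrs hint)
      (by filter_upwards with ω; positivity),
    ← ofReal_integral_eq_lintegral_ofReal hint (by filter_upwards with ω; positivity)] at key
  rw [one_div_div] at key
  rw [ENNReal.ofReal_rpow_of_nonneg (integral_nonneg fun ω => by positivity)
      (by positivity)] at key
  exact (ENNReal.ofReal_le_ofReal_iff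
    (Real.rpow_nonneg (integral_nonneg fun ω => by positivity) _)).mp key

/-- power-mean inequality -/
lemma aux_powmean {ι : Type*} {s : Finset ι} (hs : s.Nonempty) (c : ι → ℝ) {x : ℝ}
    (hx : 1 ≤ x) :
    |∑ i ∈ s, c i| ^ x ≤ (s.card : ℝ) ^ (x - 1) * ∑ i ∈ s, |c i| ^ x := by
  have hcard : (0:ℝ) < s.card := by
    exact_mod_cast Finset.card_pos.mpr hs
  have h1 : |∑ i ∈ s, c i| ^ x ≤ (∑ i ∈ s, |c i|) ^ x :=
    Real.rpow_le_rpow (abs_nonneg _) (Finset.abs_sum_le_sum_abs _ _) (by linarith)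
  have h2 := Real.rpow_arith_mean_le_arith_mean_rpow s (fun _ => (s.card:ℝ)⁻¹)
    (fun i => |c i|) (fun i _ => by positivity)
    (by rw [Finset.sum_const, nsmul_eq_mul]; field_simp) (fun i _ => abs_nonneg _) hx
  simp only [← Finset.mul_sum] at h2
  rw [Real.mul_rpow (by positivity) (Finset.sum_nonneg fun i _ => abs_nonneg _)] at h2
  -- h2 : card⁻¹ ^ x * (∑ |c|) ^ x ≤ card⁻¹ * ∑ |c|^x
  have h3 : (∑ i ∈ s, |c i|) ^ x ≤ (s.card:ℝ) ^ x * ((s.card:ℝ))⁻¹ * ∑ i ∈ s, |c i| ^ x := by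
    have h4 := mul_le_mul_of_nonneg_left h2 (le_of_lt (Real.rpow_pos_of_pos hcard x))
    rw [← mul_assoc, ← Real.mul_rpow (by positivity) (by positivity),
      mul_inv_cancel₀ hcard.ne', Real.one_rpow, one_mul] at h4
    rw [mul_assoc]
    exact h4
  have h5 : (s.card:ℝ) ^ x * ((s.card:ℝ))⁻¹ = (s.card:ℝ) ^ (x - 1) := by
    rw [← Real.rpow_neg_one (s.card:ℝ), ← Real.rpow_add hcard]
    ring_nf
  rw [h5] at h3
  exact h1.trans h3

/-- `log x ≤ 2√x`. -/
lemma aux_log_le_two_sqrt {x : ℝ} (hx : 0 < x) : Real.log x ≤ 2 * Real.sqrt x := by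
  have h1 : Real.log (Real.sqrt x) ≤ Real.sqrt x - 1 :=
    Real.log_le_sub_one_of_pos (Real.sqrt_pos.mpr hx)
  have h2 : Real.log x = 2 * Real.log (Real.sqrt x) := by
    rw [Real.log_sqrt hx.le]; ring
  have := Real.sqrt_nonneg x
  nlinarith


section Main
open MeasureTheory ProbabilityTheory Set Filter
open scoped ENNReal

variable {Ω : Type} [MeasurableSpace Ω] {P : Measure Ω} [IsProbabilityMeasure P]

/-- pointwise: `t * ψ t = |t|^x` -/
lemma aux_tpsi {x : ℝ} (hx : 2 ≤ x) (t : ℝ) : t * (t * |t| ^ (x - 2)) = |t| ^ x := by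
  rcases eq_or_ne t 0 with rfl | ht
  · rw [abs_zero, Real.zero_rpow (by linarith : x ≠ 0)]; ring
  · have habs : 0 < |t| := abs_pos.mpr ht
    have h1 : t * t = |t| ^ (2:ℝ) := by
      rw [show (2:ℝ) = ((2:ℕ):ℝ) by norm_num, Real.rpow_natCast, sq_abs, sq]
    rw [← mul_assoc, h1, ← Real.rpow_add habs]
    norm_num

lemma aux_abs_psi {x : ℝ} (hx : 2 ≤ x) (t : ℝ) : |t * |t| ^ (x - 2)| = |t| ^ (x - 1) := by
  rw [abs_mul, abs_of_nonneg (Real.rpow_nonneg (abs_nonneg t) _)]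
  rw [show x - 1 = 1 + (x - 2) by ring, Real.rpow_add' (abs_nonneg t) (by linarith : (1:ℝ) + (x-2) ≠ 0),
    Real.rpow_one]

lemma aux_sq_abs_rpow (t : ℝ) : |t| ^ (2:ℝ) = t * t := by
  rw [show (2:ℝ) = ((2:ℕ):ℝ) by norm_num, Real.rpow_natCast, sq_abs, sq]

set_option maxHeartbeats 2000000 in
lemma rosenthal_aux (ξ : ℕ → Ω → ℝ) (hmeas : ∀ i, Measurable (ξ i))
    (hindep : iIndepFun ξ P)
    (hid : ∀ i, IdentDistrib (ξ i) (ξ 0) P P)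
    (hcent : ∫ ω, ξ 0 ω ∂P = 0) :
    ∀ N : ℕ, ∀ x : ℝ, 2 ≤ x → x ≤ N → Integrable (fun ω => |ξ 0 ω| ^ x) P →
    ∀ s : Finset ℕ,
      ∫ ω, |∑ i ∈ s, ξ i ω| ^ x ∂P ≤
        (900 * x) ^ (x / 2) * (s.card : ℝ) ^ (x / 2) * ∫ ω, |ξ 0 ω| ^ x ∂P := by
  intro N
  induction N with
  | zero =>
    intro x hx2 hxN
    exfalso
    have h0 : ((0:ℕ):ℝ) = 0 := by norm_num
    rw [h0] at hxN
    linarith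
  | succ N IH =>
    intro x hx2 hxN hint s
    -- basic abbreviations and facts
    have hx0 : (0:ℝ) < x := by linarith
    set m := ∫ ω, |ξ 0 ω| ^ x ∂P with hm_def
    have hm0 : 0 ≤ m := integral_nonneg fun ω => Real.rpow_nonneg (abs_nonneg _) _
    have habs_meas : ∀ (r : ℝ) (f : Ω → ℝ), Measurable f → Measurable (fun ω => |f ω| ^ r) :=
      fun r f hf => aux_meas_absrpow hf r
    have hξx : ∀ l, Integrable (fun ω => |ξ l ω| ^ x) P := by
      intro l
      exact ((hid l).comp (aux_meas_absrpow measurable_id x)).integrable_iff.mpr hint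
    have hξx_eq : ∀ l, ∫ ω, |ξ l ω| ^ x ∂P = m := by
      intro l
      exact ((hid l).comp (aux_meas_absrpow measurable_id x)).integral_eq
    have hξr : ∀ l (r : ℝ), 0 ≤ r → r ≤ x → Integrable (fun ω => |ξ l ω| ^ r) P :=
      fun l r h1 h2 => aux_int_rpow (hmeas l) h1 h2 (hξx l)
    have hξ1 : ∀ l, Integrable (ξ l) P := by
      intro l
      have h1 : Integrable (fun ω => |ξ l ω| ^ (1:ℝ)) P := hξr l 1 zero_le_one (by linarith)
      simp only [Real.rpow_one] at h1
      exact h1.mono' (hmeas l).aestronglyMeasurable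
        (by filter_upwards with ω; rw [Real.norm_eq_abs])
    have hcentl : ∀ l, ∫ ω, ξ l ω ∂P = 0 := fun l => (hid l).integral_eq.trans hcent
    set v := ∫ ω, |ξ 0 ω| ^ (2:ℝ) ∂P with hv_def
    have hv0 : 0 ≤ v := integral_nonneg fun ω => Real.rpow_nonneg (abs_nonneg _) _
    have hξ2_eq : ∀ l, ∫ ω, |ξ l ω| ^ (2:ℝ) ∂P = v := by
      intro l
      exact ((hid l).comp (aux_meas_absrpow measurable_id 2)).integral_eq
    have hv_le : v ≤ m ^ ((2:ℝ)/x) := by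
      have := aux_lyapunov (measurable_id.comp' (hmeas 0)) (by norm_num : (0:ℝ) ≤ 2)
        (by linarith) hx0 hint
      exact this
    -- integrability and crude bound for arbitrary sums
    have key_int : ∀ t : Finset ℕ, Integrable (fun ω => |∑ l ∈ t, ξ l ω| ^ x) P := by
      intro t
      rcases t.eq_empty_or_nonempty with rfl | ht
      · simp only [Finset.sum_empty, abs_zero, Real.zero_rpow (by linarith : x ≠ 0)]
        exact integrable_const 0
      · refine Integrable.mono'
          (((integrable_finset_sum t (fun l _ => hξx l)).const_mul ((t.card:ℝ) ^ (x-1))))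
          (aux_meas_absrpow (t.measurable_sum fun l _ => hmeas l) x).aestronglyMeasurable ?_
        filter_upwards with ω
        rw [Real.norm_eq_abs, abs_of_nonneg (Real.rpow_nonneg (abs_nonneg _) _)]
        exact aux_powmean ht _ (by linarith)
    have key_bound : ∀ t : Finset ℕ,
        ∫ ω, |∑ l ∈ t, ξ l ω| ^ x ∂P ≤ (t.card:ℝ) ^ x * m := by
      intro t
      rcases t.eq_empty_or_nonempty with rfl | ht
      · simp only [Finset.sum_empty, abs_zero, Real.zero_rpow (by linarith : x ≠ 0)]
        rw [integral_zero]
        positivity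
      · have hcard1 : (1:ℝ) ≤ (t.card:ℝ) := by
          exact_mod_cast Nat.one_le_iff_ne_zero.mpr (Finset.card_ne_zero_of_mem ht.choose_spec)
        calc ∫ ω, |∑ l ∈ t, ξ l ω| ^ x ∂P
            ≤ ∫ ω, (t.card:ℝ) ^ (x-1) * ∑ l ∈ t, |ξ l ω| ^ x ∂P := by
              refine integral_mono (key_int t)
                ((integrable_finset_sum t (fun l _ => hξx l)).const_mul _) ?_
              intro ω
              exact aux_powmean ht _ (by linarith)
          _ = (t.card:ℝ) ^ (x-1) * ∑ l ∈ t, ∫ ω, |ξ l ω| ^ x ∂P := by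
              rw [integral_const_mul, integral_finset_sum t (fun l _ => hξx l)]
          _ = (t.card:ℝ) ^ (x-1) * ((t.card:ℝ) * m) := by
              rw [Finset.sum_congr rfl (fun l _ => hξx_eq l), Finset.sum_const, nsmul_eq_mul]
          _ = (t.card:ℝ) ^ x * m := by
              rw [show (t.card:ℝ) ^ x = (t.card:ℝ) ^ (x-1) * (t.card:ℝ) from by
                rw [← Real.rpow_add_one (by positivity : (t.card:ℝ) ≠ 0) (x-1)]
                congr 1
                ring]
              ring
    -- second moment of sums
    have hξ2 : ∀ l, Integrable (fun ω => ξ l ω * ξ l ω) P := by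
      intro l
      have := hξr l 2 (by norm_num) (by linarith)
      refine (this.congr ?_)
      filter_upwards with ω
      exact aux_sq_abs_rpow (ξ l ω)
    have hprod_int : ∀ l l', Integrable (fun ω => ξ l ω * ξ l' ω) P := by
      intro l l'
      rcases eq_or_ne l l' with rfl | hll'
      · exact hξ2 l
      · exact (hindep.indepFun hll').integrable_mul (hξ1 l) (hξ1 l')
    have hvar : ∀ t : Finset ℕ, ∫ ω, |∑ l ∈ t, ξ l ω| ^ (2:ℝ) ∂P = (t.card:ℝ) * v := by
      intro t
      have hpt : ∀ ω, |∑ l ∈ t, ξ l ω| ^ (2:ℝ) = ∑ l ∈ t, ∑ l' ∈ t, ξ l ω * ξ l' ω := by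
        intro ω
        rw [aux_sq_abs_rpow, Finset.sum_mul_sum]
      rw [integral_congr_ae (ae_of_all _ hpt)]
      rw [integral_finset_sum t (fun l _ => integrable_finset_sum t (fun l' _ => hprod_int l l'))]
      have hinner : ∀ l ∈ t, (∑ l' ∈ t, ∫ ω, ξ l ω * ξ l' ω ∂P) = v := by
        intro l hl
        rw [Finset.sum_eq_single_of_mem l hl]
        · have hcong : (fun ω => ξ l ω * ξ l ω) =ᵐ[P] fun ω => |ξ l ω| ^ (2:ℝ) :=
            ae_of_all _ fun ω => (aux_sq_abs_rpow _).symm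
          rw [integral_congr_ae hcong]
          exact hξ2_eq l
        · intro l' hl' hne
          have hind : IndepFun (ξ l) (ξ l') P := hindep.indepFun (Ne.symm hne)
          calc ∫ ω, ξ l ω * ξ l' ω ∂P
              = (∫ ω, ξ l ω ∂P) * ∫ ω, ξ l' ω ∂P :=
                hind.integral_fun_mul_eq_mul_integral (hξ1 l).1 (hξ1 l').1
            _ = 0 := by rw [hcentl l]; ring
      have h2 : ∑ l ∈ t, ∫ ω, ∑ l' ∈ t, ξ l ω * ξ l' ω ∂P
          = ∑ l ∈ t, ∑ l' ∈ t, ∫ ω, ξ l ω * ξ l' ω ∂P :=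
        Finset.sum_congr rfl fun l _ => integral_finset_sum t fun l' _ => hprod_int l l'
      rw [h2, Finset.sum_congr rfl hinner, Finset.sum_const, nsmul_eq_mul]
    rcases le_or_gt ((s.card:ℝ)) x with hcase | hcase
    · -- crude case
      rcases s.eq_empty_or_nonempty with rfl | hne
      · simp only [Finset.sum_empty, abs_zero, Real.zero_rpow (by linarith : x ≠ 0),
          integral_zero]
        positivity
      · have hcard0 : (0:ℝ) < (s.card:ℝ) := by
          exact_mod_cast Finset.card_pos.mpr hne
        calc ∫ ω, |∑ i ∈ s, ξ i ω| ^ x ∂P ≤ (s.card:ℝ) ^ x * m := key_bound s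
          _ = (s.card:ℝ) ^ (x/2) * (s.card:ℝ) ^ (x/2) * m := by
              rw [← Real.rpow_add hcard0]; norm_num
          _ ≤ (900*x) ^ (x/2) * (s.card:ℝ) ^ (x/2) * m := by
              have h1 : (s.card:ℝ) ^ (x/2) ≤ (900*x) ^ (x/2) :=
                Real.rpow_le_rpow hcard0.le (by linarith) (by linarith)
              have h2 : (0:ℝ) ≤ (s.card:ℝ) ^ (x/2) := Real.rpow_nonneg hcard0.le _
              nlinarith [mul_le_mul_of_nonneg_right h1 h2]
    · -- main case : x < s.card
      have hcard1 : (1:ℝ) ≤ (s.card:ℝ) := by linarith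
      have hcard0 : (0:ℝ) < (s.card:ℝ) := by linarith
      set T : Ω → ℝ := fun ω => ∑ i ∈ s, ξ i ω with hT_def
      have hTmeas : Measurable T := s.measurable_sum fun i _ => hmeas i
      set ψ : ℝ → ℝ := fun t => t * |t| ^ (x - 2) with hψ_def
      have hψmeas : Measurable ψ :=
        measurable_id.mul ((measurable_id.comp' measurable_abs).pow_const _)
      have hT'meas : ∀ i : ℕ, Measurable (fun ω => ∑ l ∈ s.erase i, ξ l ω) :=
        fun i => (s.erase i).measurable_sum fun l _ => hmeas l
      have hsplit : ∀ i ∈ s, ∀ ω, T ω = (∑ l ∈ s.erase i, ξ l ω) + ξ i ω := by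
        intro i hi ω
        change (∑ l ∈ s, ξ l ω) = _
        rw [← Finset.add_sum_erase s (fun l => ξ l ω) hi]
        ring
      have hInd : ∀ i ∈ s, IndepFun (fun ω => ∑ l ∈ s.erase i, ξ l ω) (ξ i) P := by
        intro i _
        have h := hindep.indepFun_finsetSum_of_notMem hmeas (Finset.notMem_erase i s)
        have he : (∑ j ∈ s.erase i, ξ j) = fun ω => ∑ l ∈ s.erase i, ξ l ω := by
          funext ω; simp
        rwa [he] at h
      have hT'x : ∀ i : ℕ, Integrable (fun ω => |∑ l ∈ s.erase i, ξ l ω| ^ x) P :=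
        fun i => key_int _
      have hT'r : ∀ (i : ℕ) (r:ℝ), 0 ≤ r → r ≤ x →
          Integrable (fun ω => |∑ l ∈ s.erase i, ξ l ω| ^ r) P :=
        fun i r h1 h2 => aux_int_rpow (hT'meas i) h1 h2 (hT'x i)
      have hTx : Integrable (fun ω => |T ω| ^ x) P := key_int s
      -- Step B
      have hint_xiT : ∀ i ∈ s, Integrable (fun ω => ξ i ω * ψ (T ω)) P := by
        intro i _
        refine Integrable.mono' ((hξx i).add hTx)
          ((hmeas i).mul (hψmeas.comp hTmeas)).aestronglyMeasurable ?_
        filter_upwards with ω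
        rw [Real.norm_eq_abs, abs_mul, aux_abs_psi hx2]
        calc |ξ i ω| * |T ω| ^ (x-1)
            = |ξ i ω| ^ (x - (x-1)) * |T ω| ^ (x-1) := by
              rw [show x - (x-1) = 1 by ring, Real.rpow_one]
          _ ≤ |ξ i ω| ^ x + |T ω| ^ x :=
              aux_W (abs_nonneg _) (abs_nonneg _) (by linarith) (by linarith) hx0
      have hstepB : ∫ ω, |T ω| ^ x ∂P = ∑ i ∈ s, ∫ ω, ξ i ω * ψ (T ω) ∂P := by
        rw [← integral_finset_sum s hint_xiT]
        refine integral_congr_ae (ae_of_all _ fun ω => ?_)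
        show |T ω| ^ x = ∑ i ∈ s, ξ i ω * ψ (T ω)
        rw [← Finset.sum_mul]
        exact (aux_tpsi hx2 (T ω)).symm
      -- Step C
      have hψT'int : ∀ i ∈ s, Integrable (fun ω => ψ (∑ l ∈ s.erase i, ξ l ω)) P := by
        intro i _
        have h1 : Integrable (fun ω => |∑ l ∈ s.erase i, ξ l ω| ^ (x-1)) P :=
          hT'r i (x-1) (by linarith) (by linarith)
        refine h1.mono' (hψmeas.comp (hT'meas i)).aestronglyMeasurable ?_
        filter_upwards with ω
        rw [Real.norm_eq_abs, aux_abs_psi hx2]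
      have hint_xiT' : ∀ i ∈ s, Integrable (fun ω => ξ i ω * ψ (∑ l ∈ s.erase i, ξ l ω)) P := by
        intro i hi
        exact ((hInd i hi).symm.comp measurable_id hψmeas).integrable_mul
          (hξ1 i) (hψT'int i hi)
      have hzero : ∀ i ∈ s, ∫ ω, ξ i ω * ψ (∑ l ∈ s.erase i, ξ l ω) ∂P = 0 := by
        intro i hi
        calc ∫ ω, ξ i ω * ψ (∑ l ∈ s.erase i, ξ l ω) ∂P
            = (∫ ω, ξ i ω ∂P) * ∫ ω, ψ (∑ l ∈ s.erase i, ξ l ω) ∂P :=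
              ((hInd i hi).symm.comp measurable_id hψmeas).integral_fun_mul_eq_mul_integral
                (hξ1 i).1 (hψT'int i hi).1
          _ = 0 := by rw [hcentl i]; ring
      have hstepC : ∀ i ∈ s, ∫ ω, ξ i ω * ψ (T ω) ∂P
          = ∫ ω, ξ i ω * (ψ (T ω) - ψ (∑ l ∈ s.erase i, ξ l ω)) ∂P := by
        intro i hi
        have heq : (fun ω => ξ i ω * (ψ (T ω) - ψ (∑ l ∈ s.erase i, ξ l ω)))
            = fun ω => ξ i ω * ψ (T ω) - ξ i ω * ψ (∑ l ∈ s.erase i, ξ l ω) := by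
          funext ω; ring
        rw [heq, integral_sub (hint_xiT i hi) (hint_xiT' i hi), hzero i hi, sub_zero]
      -- Step D
      set K1 : ℝ := (1 + x⁻¹) ^ (x - 2) with hK1_def
      set K2 : ℝ := (1 + x) ^ (x - 2) with hK2_def
      have hK1nn : 0 ≤ K1 := Real.rpow_nonneg (by positivity) _
      have hK2nn : 0 ≤ K2 := Real.rpow_nonneg (by positivity) _
      have hK1le : K1 ≤ 3 := by
        have h1 : (1 + x⁻¹ : ℝ) ≤ Real.exp x⁻¹ := by
          have := Real.add_one_le_exp x⁻¹; linarith
        calc K1 ≤ (Real.exp x⁻¹) ^ (x - 2) :=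
              Real.rpow_le_rpow (by positivity) h1 (by linarith)
          _ = Real.exp (x⁻¹ * (x - 2)) := by
              rw [Real.rpow_def_of_pos (Real.exp_pos _), Real.log_exp]
          _ ≤ Real.exp 1 := by
              apply Real.exp_le_exp.mpr
              rw [inv_mul_eq_div, div_le_one hx0]
              linarith
          _ ≤ 3 := by
              have := Real.exp_one_lt_d9
              linarith
      have hmul_int : ∀ i ∈ s, Integrable
          (fun ω => |∑ l ∈ s.erase i, ξ l ω| ^ (x-2) * |ξ i ω| ^ (2:ℝ)) P := by
        intro i hi
        exact ((hInd i hi).comp (aux_meas_absrpow measurable_id (x-2))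
          (aux_meas_absrpow measurable_id 2)).integrable_mul
          (hT'r i (x-2) (by linarith) (by linarith)) (hξr i 2 (by norm_num) (by linarith))
      have hmul_eq : ∀ i ∈ s, ∫ ω, |∑ l ∈ s.erase i, ξ l ω| ^ (x-2) * |ξ i ω| ^ (2:ℝ) ∂P
          = (∫ ω, |∑ l ∈ s.erase i, ξ l ω| ^ (x-2) ∂P) * v := by
        intro i hi
        rw [← hξ2_eq i]
        exact ((hInd i hi).comp (aux_meas_absrpow measurable_id (x-2))
          (aux_meas_absrpow measurable_id 2)).integral_fun_mul_eq_mul_integral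
          (hT'r i (x-2) (by linarith) (by linarith)).1 (hξr i 2 (by norm_num) (by linarith)).1
      have hpt : ∀ i ∈ s, ∀ ω, ξ i ω * (ψ (T ω) - ψ (∑ l ∈ s.erase i, ξ l ω))
          ≤ (x-1) * (K1 * (|∑ l ∈ s.erase i, ξ l ω| ^ (x-2) * |ξ i ω| ^ (2:ℝ))
              + K2 * |ξ i ω| ^ x) := by
        intro i hi ω
        set a := ∑ l ∈ s.erase i, ξ l ω with ha_def
        set b := ξ i ω with hb_def
        have hT_eq : T ω = a + b := hsplit i hi ω
        have h1 : ξ i ω * (ψ (T ω) - ψ a) ≤ |b| * |ψ (a+b) - ψ a| := by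
          rw [hT_eq]
          calc b * (ψ (a+b) - ψ a) ≤ |b * (ψ (a+b) - ψ a)| := le_abs_self _
            _ = |b| * |ψ (a+b) - ψ a| := abs_mul _ _
        have h2 : |ψ (a+b) - ψ a| ≤ (x-1) * (|a| + |b|) ^ (x-2) * |b| :=
          aux_psi hx2 a b
        have h3 : (|a| + |b|) ^ (x-2) ≤ K1 * |a| ^ (x-2) + K2 * |b| ^ (x-2) := by
          have := aux_split (abs_nonneg a) (abs_nonneg b) (by linarith : (0:ℝ) ≤ x - 2)
            (by positivity : (0:ℝ) < x⁻¹)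
          rwa [inv_inv] at this
        have hbb : |b| * |b| = |b| ^ (2:ℝ) := by
          rw [aux_sq_abs_rpow]; exact abs_mul_abs_self b
        have hbx : |b| ^ (x-2) * |b| ^ (2:ℝ) = |b| ^ x := by
          rw [← Real.rpow_add' (abs_nonneg b) (by linarith : x - 2 + 2 ≠ 0)]
          norm_num
        calc ξ i ω * (ψ (T ω) - ψ a) ≤ |b| * |ψ (a+b) - ψ a| := h1
          _ ≤ |b| * ((x-1) * (|a| + |b|) ^ (x-2) * |b|) := by
              apply mul_le_mul_of_nonneg_left h2 (abs_nonneg b)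
          _ = (x-1) * ((|a| + |b|) ^ (x-2) * (|b| * |b|)) := by ring
          _ ≤ (x-1) * ((K1 * |a| ^ (x-2) + K2 * |b| ^ (x-2)) * (|b| * |b|)) := by
              apply mul_le_mul_of_nonneg_left _ (by linarith : (0:ℝ) ≤ x - 1)
              apply mul_le_mul_of_nonneg_right h3 (by positivity)
          _ = (x-1) * (K1 * (|a| ^ (x-2) * |b| ^ (2:ℝ)) + K2 * (|b| ^ (x-2) * |b| ^ (2:ℝ))) := by
              rw [hbb]; ring
          _ = (x-1) * (K1 * (|a| ^ (x-2) * |b| ^ (2:ℝ)) + K2 * |b| ^ x) := by rw [hbx]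
      have hstepD : ∀ i ∈ s, ∫ ω, ξ i ω * ψ (T ω) ∂P
          ≤ (x-1) * (K1 * ((∫ ω, |∑ l ∈ s.erase i, ξ l ω| ^ (x-2) ∂P) * v) + K2 * m) := by
        intro i hi
        rw [hstepC i hi]
        have hRint : Integrable (fun ω => (x-1) * (K1 * (|∑ l ∈ s.erase i, ξ l ω| ^ (x-2)
            * |ξ i ω| ^ (2:ℝ)) + K2 * |ξ i ω| ^ x)) P :=
          (((hmul_int i hi).const_mul K1).add ((hξx i).const_mul K2)).const_mul (x-1)
        calc ∫ ω, ξ i ω * (ψ (T ω) - ψ (∑ l ∈ s.erase i, ξ l ω)) ∂P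
            ≤ ∫ ω, (x-1) * (K1 * (|∑ l ∈ s.erase i, ξ l ω| ^ (x-2) * |ξ i ω| ^ (2:ℝ))
                + K2 * |ξ i ω| ^ x) ∂P :=
              integral_mono (((hint_xiT i hi).sub (hint_xiT' i hi)).congr
                (ae_of_all _ fun ω => by simp only [Pi.sub_apply]; ring)) hRint (hpt i hi)
          _ = (x-1) * (K1 * ((∫ ω, |∑ l ∈ s.erase i, ξ l ω| ^ (x-2) ∂P) * v) + K2 * m) := by
              rw [integral_const_mul, integral_add ((hmul_int i hi).const_mul K1)
                ((hξx i).const_mul K2), integral_const_mul, integral_const_mul,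
                hmul_eq i hi, hξx_eq i]
      -- now bound ∫ |T'|^(x-2) in the two regimes, write Q i for it
      have hQnn : ∀ i : ℕ, 0 ≤ ∫ ω, |∑ l ∈ s.erase i, ξ l ω| ^ (x-2) ∂P :=
        fun i => integral_nonneg fun ω => Real.rpow_nonneg (abs_nonneg _) _
      have main_chain : ∀ D : ℝ, 0 ≤ D →
          (∀ i ∈ s, ∫ ω, |∑ l ∈ s.erase i, ξ l ω| ^ (x-2) ∂P ≤ D) →
          ∫ ω, |T ω| ^ x ∂P ≤ (s.card:ℝ) * ((x-1) * (K1 * (D * v) + K2 * m)) := by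
        intro D hD0 hD
        rw [hstepB]
        calc ∑ i ∈ s, ∫ ω, ξ i ω * ψ (T ω) ∂P
            ≤ ∑ _i ∈ s, (x-1) * (K1 * (D * v) + K2 * m) := by
              refine Finset.sum_le_sum fun i hi => (hstepD i hi).trans ?_
              have h1 : K1 * ((∫ ω, |∑ l ∈ s.erase i, ξ l ω| ^ (x-2) ∂P) * v)
                  ≤ K1 * (D * v) :=
                mul_le_mul_of_nonneg_left
                  (mul_le_mul_of_nonneg_right (hD i hi) hv0) hK1nn
              have := add_le_add_left h1 (K2 * m)
              exact mul_le_mul_of_nonneg_left this (by linarith : (0:ℝ) ≤ x - 1)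
          _ = (s.card:ℝ) * ((x-1) * (K1 * (D * v) + K2 * m)) := by
              rw [Finset.sum_const, nsmul_eq_mul]
      -- useful powers of card
      have hA_nn : (0:ℝ) ≤ (s.card:ℝ) ^ (x/2) := Real.rpow_nonneg hcard0.le _
      have hc2_nn : (0:ℝ) ≤ (s.card:ℝ) ^ ((x-2)/2) := Real.rpow_nonneg hcard0.le _
      have hcard_c2 : (s.card:ℝ) * (s.card:ℝ) ^ ((x-2)/2) = (s.card:ℝ) ^ (x/2) := by
        nth_rewrite 1 [← Real.rpow_one (s.card:ℝ)]
        rw [← Real.rpow_add hcard0]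
        congr 1
        ring
      have hcard_le_A : (s.card:ℝ) ≤ (s.card:ℝ) ^ (x/2) := by
        nth_rewrite 1 [← Real.rpow_one (s.card:ℝ)]
        exact Real.rpow_le_rpow_of_exponent_le hcard1 (by linarith)
      have hxne : x ≠ 0 := hx0.ne'
      have hsum1 : (x-2)/2 * (2/x) + 2/x = 1 := by field_simp; ring
      have hvx : v ^ ((x-2)/2) ≤ m ^ ((x-2)/2 * (2/x)) := by
        calc v ^ ((x-2)/2) ≤ (m ^ (2/x)) ^ ((x-2)/2) :=
              Real.rpow_le_rpow hv0 hv_le (by linarith)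
          _ = m ^ (2/x * ((x-2)/2)) := (Real.rpow_mul hm0 _ _).symm
          _ = m ^ ((x-2)/2 * (2/x)) := by ring_nf
      have hvm : v ^ ((x-2)/2) * v ≤ m := by
        have h1 : v ^ ((x-2)/2) * v ≤ m ^ ((x-2)/2 * (2/x)) * m ^ (2/x) :=
          mul_le_mul hvx hv_le hv0 (Real.rpow_nonneg hm0 _)
        refine h1.trans (le_of_eq ?_)
        rw [← Real.rpow_add' hm0 (by rw [hsum1]; norm_num), hsum1, Real.rpow_one]
      rcases lt_or_ge x 4 with hx4 | hx4
      · -- base regime : 2 ≤ x < 4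
        have hD : ∀ i ∈ s, ∫ ω, |∑ l ∈ s.erase i, ξ l ω| ^ (x-2) ∂P
            ≤ ((s.card:ℝ) * v) ^ ((x-2)/2) := by
          intro i hi
          calc ∫ ω, |∑ l ∈ s.erase i, ξ l ω| ^ (x-2) ∂P
              ≤ (∫ ω, |∑ l ∈ s.erase i, ξ l ω| ^ (2:ℝ) ∂P) ^ ((x-2)/2) :=
                aux_lyapunov (hT'meas i) (by linarith : (0:ℝ) ≤ x - 2)
                  (by linarith : x - 2 ≤ 2) (by norm_num) (hT'r i 2 (by norm_num) (by linarith))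
            _ = (((s.erase i).card:ℝ) * v) ^ ((x-2)/2) := by rw [hvar]
            _ ≤ ((s.card:ℝ) * v) ^ ((x-2)/2) := by
                apply Real.rpow_le_rpow (mul_nonneg (Nat.cast_nonneg _) hv0) _ (by linarith)
                apply mul_le_mul_of_nonneg_right _ hv0
                exact_mod_cast Finset.card_le_card (Finset.erase_subset i s)
        have hDv : ((s.card:ℝ) * v) ^ ((x-2)/2) * v ≤ (s.card:ℝ) ^ ((x-2)/2) * m := by
          rw [Real.mul_rpow hcard0.le hv0, mul_assoc]
          exact mul_le_mul_of_nonneg_left hvm hc2_nn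
        have hK2le : K2 ≤ 25 := by
          calc K2 ≤ (5:ℝ) ^ (x-2) :=
                Real.rpow_le_rpow (by positivity) (by linarith) (by linarith)
            _ ≤ (5:ℝ) ^ (2:ℝ) :=
                Real.rpow_le_rpow_of_exponent_le (by norm_num) (by linarith)
            _ = 25 := by
                rw [show (2:ℝ) = ((2:ℕ):ℝ) by norm_num, Real.rpow_natCast]; norm_num
        calc ∫ ω, |T ω| ^ x ∂P
            ≤ (s.card:ℝ) * ((x-1) * (K1 * (((s.card:ℝ) * v) ^ ((x-2)/2) * v) + K2 * m)) :=
              main_chain _ (Real.rpow_nonneg (mul_nonneg hcard0.le hv0) _) hD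
          _ ≤ (s.card:ℝ) * ((x-1) * (3 * ((s.card:ℝ) ^ ((x-2)/2) * m) + 25 * m)) := by
              refine mul_le_mul_of_nonneg_left ?_ hcard0.le
              refine mul_le_mul_of_nonneg_left ?_ (by linarith : (0:ℝ) ≤ x - 1)
              refine add_le_add ?_ (mul_le_mul_of_nonneg_right hK2le hm0)
              calc K1 * (((s.card:ℝ) * v) ^ ((x-2)/2) * v)
                  ≤ 3 * (((s.card:ℝ) * v) ^ ((x-2)/2) * v) :=
                    mul_le_mul_of_nonneg_right hK1le
                      (mul_nonneg (Real.rpow_nonneg (mul_nonneg hcard0.le hv0) _) hv0)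
                _ ≤ 3 * ((s.card:ℝ) ^ ((x-2)/2) * m) := by linarith [hDv]
          _ = 3 * (x-1) * ((s.card:ℝ) * ((s.card:ℝ) ^ ((x-2)/2) * m))
              + 25 * (x-1) * ((s.card:ℝ) * m) := by ring
          _ ≤ 1800 * ((s.card:ℝ) ^ (x/2) * m) := by
              have e1 : (s.card:ℝ) * ((s.card:ℝ) ^ ((x-2)/2) * m) = (s.card:ℝ) ^ (x/2) * m := by
                rw [← mul_assoc, hcard_c2]
              have e2 : (s.card:ℝ) * m ≤ (s.card:ℝ) ^ (x/2) * m :=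
                mul_le_mul_of_nonneg_right hcard_le_A hm0
              have e3 : (0:ℝ) ≤ (s.card:ℝ) ^ (x/2) * m := mul_nonneg hA_nn hm0
              have h31 : (x-1) ≤ 3 := by linarith
              have h10 : (0:ℝ) ≤ x - 1 := by linarith
              rw [e1]
              have e4 : (0:ℝ) ≤ (s.card:ℝ) * m := mul_nonneg hcard0.le hm0
              nlinarith [mul_le_mul_of_nonneg_left e2 (by linarith : (0:ℝ) ≤ 25 * (x-1))]
          _ ≤ (900*x) ^ (x/2) * (s.card:ℝ) ^ (x/2) * m := by
              have h1 : (1800:ℝ) ≤ (900*x) ^ (x/2) := by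
                calc (1800:ℝ) ≤ 900 * x := by linarith
                  _ = (900*x) ^ (1:ℝ) := (Real.rpow_one _).symm
                  _ ≤ (900*x) ^ (x/2) :=
                    Real.rpow_le_rpow_of_exponent_le (by linarith) (by linarith)
              have := mul_le_mul_of_nonneg_right h1 (mul_nonneg hA_nn hm0)
              calc 1800 * ((s.card:ℝ) ^ (x/2) * m)
                  ≤ (900*x) ^ (x/2) * ((s.card:ℝ) ^ (x/2) * m) := this
                _ = (900*x) ^ (x/2) * (s.card:ℝ) ^ (x/2) * m := by ring
      · -- inductive regime : 4 ≤ x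
        have hxN' : x - 2 ≤ (N:ℝ) := by
          push_cast at hxN
          linarith
        have hm'int : Integrable (fun ω => |ξ 0 ω| ^ (x-2)) P :=
          hξr 0 (x-2) (by linarith) (by linarith)
        have hm'le : ∫ ω, |ξ 0 ω| ^ (x-2) ∂P ≤ m ^ ((x-2)/x) :=
          aux_lyapunov (measurable_id.comp' (hmeas 0)) (by linarith : (0:ℝ) ≤ x-2)
            (by linarith : x - 2 ≤ x) hx0 hint
        have h900 : (0:ℝ) < 900 * x := by linarith
        have hdiv1 : (x-2)/x + 2/x = 1 := by field_simp; ring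
        set D2 : ℝ := (900*x) ^ ((x-2)/2) * (s.card:ℝ) ^ ((x-2)/2) * m ^ ((x-2)/x) with hD2_def
        have hE1nn : (0:ℝ) ≤ (900*x) ^ ((x-2)/2) := Real.rpow_nonneg h900.le _
        have hD2nn : 0 ≤ D2 :=
          mul_nonneg (mul_nonneg hE1nn hc2_nn) (Real.rpow_nonneg hm0 _)
        have hD : ∀ i ∈ s, ∫ ω, |∑ l ∈ s.erase i, ξ l ω| ^ (x-2) ∂P ≤ D2 := by
          intro i hi
          have hIH := IH (x-2) (by linarith) hxN' hm'int (s.erase i)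
          refine hIH.trans ?_
          rw [hD2_def]
          have b1 : ((900:ℝ)*(x-2)) ^ ((x-2)/2) ≤ (900*x) ^ ((x-2)/2) :=
            Real.rpow_le_rpow (by linarith) (by linarith) (by linarith)
          have b2 : (((s.erase i).card:ℝ)) ^ ((x-2)/2) ≤ (s.card:ℝ) ^ ((x-2)/2) := by
            apply Real.rpow_le_rpow (Nat.cast_nonneg _) _ (by linarith)
            exact_mod_cast Finset.card_le_card (Finset.erase_subset i s)
          have hint' : (0:ℝ) ≤ ∫ ω, |ξ 0 ω| ^ (x-2) ∂P :=
            integral_nonneg fun ω => Real.rpow_nonneg (abs_nonneg _) _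
          exact mul_le_mul (mul_le_mul b1 b2 (Real.rpow_nonneg (Nat.cast_nonneg _) _)
            hE1nn) hm'le hint' (mul_nonneg hE1nn hc2_nn)
        have hD2v : D2 * v ≤ (900*x) ^ ((x-2)/2) * ((s.card:ℝ) ^ ((x-2)/2) * m) := by
          rw [hD2_def]
          have h1 : m ^ ((x-2)/x) * v ≤ m := by
            have h2 : m ^ ((x-2)/x) * v ≤ m ^ ((x-2)/x) * m ^ (2/x) :=
              mul_le_mul_of_nonneg_left hv_le (Real.rpow_nonneg hm0 _)
            refine h2.trans (le_of_eq ?_)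
            rw [← Real.rpow_add' hm0 (by rw [hdiv1]; norm_num), hdiv1, Real.rpow_one]
          calc (900*x) ^ ((x-2)/2) * (s.card:ℝ) ^ ((x-2)/2) * m ^ ((x-2)/x) * v
              = (900*x) ^ ((x-2)/2) * ((s.card:ℝ) ^ ((x-2)/2) * (m ^ ((x-2)/x) * v)) := by
                ring
            _ ≤ (900*x) ^ ((x-2)/2) * ((s.card:ℝ) ^ ((x-2)/2) * m) := by
                apply mul_le_mul_of_nonneg_left _ hE1nn
                exact mul_le_mul_of_nonneg_left h1 hc2_nn
        have hpowsplit : ((900:ℝ)*x) ^ (x/2) = (900*x) ^ ((x-2)/2) * (900*x) := by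
          rw [← Real.rpow_add_one (ne_of_gt h900) ((x-2)/2)]
          congr 1; ring
        have hterm1 : 3*(x-1) * (900*x) ^ ((x-2)/2) ≤ (1/2) * (900*x) ^ (x/2) := by
          rw [hpowsplit]
          have h3 : 3*(x-1) ≤ (1/2) * (900*x) := by linarith
          calc 3*(x-1) * (900*x) ^ ((x-2)/2) ≤ ((1/2) * (900*x)) * (900*x) ^ ((x-2)/2) :=
                mul_le_mul_of_nonneg_right h3 hE1nn
            _ = (1/2) * ((900*x) ^ ((x-2)/2) * (900*x)) := by ring
        have h2x : (0:ℝ) ≤ x - 2 := by linarith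
        have hxpow_nn : (0:ℝ) ≤ x ^ (x-1) := Real.rpow_nonneg hx0.le _
        have hK2b : (x-1) * K2 ≤ 2 ^ x * x ^ (x-1) := by
          have f1 : K2 ≤ (2*x) ^ (x-2) :=
            Real.rpow_le_rpow (by linarith) (by linarith) h2x
          have f2 : ((2:ℝ)*x) ^ (x-2) = 2 ^ (x-2) * x ^ (x-2) :=
            Real.mul_rpow (by norm_num) hx0.le
          have f3 : (2:ℝ) ^ (x-2) ≤ 2 ^ x :=
            Real.rpow_le_rpow_of_exponent_le one_le_two (by linarith)
          have f4 : (0:ℝ) ≤ x ^ (x-2) := Real.rpow_nonneg hx0.le _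
          have f5 : x * x ^ (x-2) = x ^ (x-1) := by
            nth_rewrite 1 [← Real.rpow_one x]
            rw [← Real.rpow_add hx0]; congr 1; ring
          calc (x-1) * K2 ≤ x * ((2:ℝ) ^ (x-2) * x ^ (x-2)) := by
                rw [← f2]
                apply mul_le_mul (by linarith) f1 hK2nn hx0.le
            _ ≤ x * ((2:ℝ) ^ x * x ^ (x-2)) :=
                mul_le_mul_of_nonneg_left (mul_le_mul_of_nonneg_right f3 f4) hx0.le
            _ = 2 ^ x * (x * x ^ (x-2)) := by ring
            _ = 2 ^ x * x ^ (x-1) := by rw [f5]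
        have g1 : ((900:ℝ)*x) ^ (x/2) = 30 ^ x * x ^ (x/2) := by
          rw [Real.mul_rpow (by norm_num) hx0.le]
          congr 1
          rw [show (900:ℝ) = 30 ^ (2:ℝ) from by
              rw [show (2:ℝ) = ((2:ℕ):ℝ) by norm_num, Real.rpow_natCast]; norm_num,
            ← Real.rpow_mul (by norm_num : (0:ℝ) ≤ 30)]
          congr 1; ring
        have g2 : x ^ (x/2) * x ^ (x/2 - 1) = x ^ (x-1) := by
          rw [← Real.rpow_add hx0]; congr 1; ring
        have g3 : (s.card:ℝ) * x ^ (x/2-1) ≤ (s.card:ℝ) ^ (x/2) := by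
          have h1 : x ^ (x/2-1) ≤ (s.card:ℝ) ^ (x/2-1) :=
            Real.rpow_le_rpow hx0.le hcase.le (by linarith)
          calc (s.card:ℝ) * x ^ (x/2-1) ≤ (s.card:ℝ) * (s.card:ℝ) ^ (x/2-1) :=
                mul_le_mul_of_nonneg_left h1 hcard0.le
            _ = (s.card:ℝ) ^ (x/2) := by
                nth_rewrite 1 [← Real.rpow_one (s.card:ℝ)]
                rw [← Real.rpow_add hcard0]; congr 1; ring
        have g4 : (2:ℝ) ^ x * 2 ≤ 30 ^ x := by
          have ha : (2:ℝ) ≤ 2 ^ x := by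
            nth_rewrite 1 [← Real.rpow_one 2]
            exact Real.rpow_le_rpow_of_exponent_le one_le_two (by linarith)
          have hb : (2:ℝ) ^ x * 2 ^ x = 4 ^ x := by
            rw [← Real.mul_rpow (by norm_num) (by norm_num)]; norm_num
          have hc : (4:ℝ) ^ x ≤ 30 ^ x :=
            Real.rpow_le_rpow (by norm_num) (by norm_num) hx0.le
          have h2xnn : (0:ℝ) ≤ 2 ^ x := Real.rpow_nonneg (by norm_num) x
          nlinarith
        have hterm2 : (s.card:ℝ) * ((x-1) * K2) ≤ (1/2) * (900*x) ^ (x/2) * (s.card:ℝ) ^ (x/2) := by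
          calc (s.card:ℝ) * ((x-1) * K2) ≤ (s.card:ℝ) * (2 ^ x * x ^ (x-1)) :=
                mul_le_mul_of_nonneg_left hK2b hcard0.le
            _ ≤ (1/2) * 30 ^ x * x ^ (x-1) * (s.card:ℝ) := by
                have h2half : (2:ℝ) ^ x ≤ (1/2) * 30 ^ x := by linarith [g4]
                have ht : (0:ℝ) ≤ x ^ (x-1) * (s.card:ℝ) := mul_nonneg hxpow_nn hcard0.le
                calc (s.card:ℝ) * (2 ^ x * x ^ (x-1))
                    = 2 ^ x * (x ^ (x-1) * (s.card:ℝ)) := by ring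
                  _ ≤ ((1/2) * 30 ^ x) * (x ^ (x-1) * (s.card:ℝ)) :=
                      mul_le_mul_of_nonneg_right h2half ht
                  _ = (1/2) * 30 ^ x * x ^ (x-1) * (s.card:ℝ) := by ring
            _ = (1/2) * 30 ^ x * (x ^ (x/2) * x ^ (x/2-1)) * (s.card:ℝ) := by rw [g2]
            _ ≤ (1/2) * 30 ^ x * x ^ (x/2) * ((s.card:ℝ) ^ (x/2)) := by
                have hcoef : (0:ℝ) ≤ (1/2) * 30 ^ x * x ^ (x/2) :=
                  mul_nonneg (mul_nonneg (by norm_num) (Real.rpow_nonneg (by norm_num) x))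
                    (Real.rpow_nonneg hx0.le _)
                calc (1/2) * 30 ^ x * (x ^ (x/2) * x ^ (x/2-1)) * (s.card:ℝ)
                    = ((1/2) * 30 ^ x * x ^ (x/2)) * ((s.card:ℝ) * x ^ (x/2-1)) := by ring
                  _ ≤ ((1/2) * 30 ^ x * x ^ (x/2)) * ((s.card:ℝ) ^ (x/2)) :=
                      mul_le_mul_of_nonneg_left g3 hcoef
                  _ = (1/2) * 30 ^ x * x ^ (x/2) * ((s.card:ℝ) ^ (x/2)) := by ring
            _ = (1/2) * (900*x) ^ (x/2) * (s.card:ℝ) ^ (x/2) := by rw [g1]; ring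
        calc ∫ ω, |T ω| ^ x ∂P
            ≤ (s.card:ℝ) * ((x-1) * (K1 * (D2 * v) + K2 * m)) := main_chain D2 hD2nn hD
          _ ≤ (s.card:ℝ) * ((x-1) * (3 * ((900*x) ^ ((x-2)/2) * ((s.card:ℝ) ^ ((x-2)/2) * m))
              + K2 * m)) := by
              refine mul_le_mul_of_nonneg_left ?_ hcard0.le
              refine mul_le_mul_of_nonneg_left ?_ (by linarith : (0:ℝ) ≤ x-1)
              refine add_le_add ?_ le_rfl
              calc K1 * (D2 * v) ≤ 3 * (D2 * v) :=
                    mul_le_mul_of_nonneg_right hK1le (mul_nonneg hD2nn hv0)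
                _ ≤ 3 * ((900*x) ^ ((x-2)/2) * ((s.card:ℝ) ^ ((x-2)/2) * m)) :=
                    mul_le_mul_of_nonneg_left hD2v (by norm_num)
          _ = (3*(x-1) * (900*x) ^ ((x-2)/2)) * ((s.card:ℝ) * (s.card:ℝ) ^ ((x-2)/2)) * m
              + ((s.card:ℝ) * ((x-1) * K2)) * m := by ring
          _ ≤ ((1/2) * (900*x) ^ (x/2)) * ((s.card:ℝ) ^ (x/2)) * m
              + ((1/2) * (900*x) ^ (x/2) * (s.card:ℝ) ^ (x/2)) * m := by
              refine add_le_add ?_ (mul_le_mul_of_nonneg_right hterm2 hm0)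
              rw [hcard_c2]
              exact mul_le_mul_of_nonneg_right
                (mul_le_mul_of_nonneg_right hterm1 hA_nn) hm0
          _ = (900*x) ^ (x/2) * (s.card:ℝ) ^ (x/2) * m := by ring

lemma aux_markov {Ω : Type} [MeasurableSpace Ω] {P : Measure Ω} [IsProbabilityMeasure P]
    {f : Ω → ℝ} {x u : ℝ} (hx : 0 < x) (hu : 0 < u)
    (hint : Integrable (fun ω => |f ω| ^ x) P) :
    P {ω | u < |f ω|} ≤ ENNReal.ofReal ((∫ ω, |f ω| ^ x ∂P) / u ^ x) := by
  have hsub : {ω | u < |f ω|} ⊆ {ω | u ^ x ≤ |f ω| ^ x} := fun ω hω =>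
    Real.rpow_le_rpow hu.le (le_of_lt hω) hx.le
  have h1 := mul_meas_ge_le_integral_of_nonneg
    (ae_of_all _ fun ω => Real.rpow_nonneg (abs_nonneg (f ω)) x) hint (u ^ x)
  have hux : (0:ℝ) < u ^ x := Real.rpow_pos_of_pos hu x
  have h3 : (P {ω | u ^ x ≤ |f ω| ^ x}).toReal ≤ (∫ ω, |f ω| ^ x ∂P) / u ^ x := by
    rw [le_div_iff₀ hux]
    rw [measureReal_def] at h1; nlinarith [h1]
  calc P {ω | u < |f ω|} ≤ P {ω | u ^ x ≤ |f ω| ^ x} := measure_mono hsub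
    _ = ENNReal.ofReal ((P {ω | u ^ x ≤ |f ω| ^ x}).toReal) :=
        (ENNReal.ofReal_toReal (measure_ne_top P _)).symm
    _ ≤ ENNReal.ofReal ((∫ ω, |f ω| ^ x ∂P) / u ^ x) := ENNReal.ofReal_le_ofReal h3

lemma aux_group {Ω : Type} [MeasurableSpace Ω] {P : Measure Ω} [IsProbabilityMeasure P]
    (ξ : ℕ → Ω → ℝ) (hmeas : ∀ i, Measurable (ξ i))
    (hindep : iIndepFun ξ P)
    (hid : ∀ i, IdentDistrib (ξ i) (ξ 0) P P)
    (hcent : ∫ ω, ξ 0 ω ∂P = 0) {x : ℝ} (hx : 2 ≤ x)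
    (hint : Integrable (fun ω => |ξ 0 ω| ^ x) P) (n : ℕ) (hn : 1 ≤ n) :
    Integrable (fun ω => |(n:ℝ) ^ (-(1/2:ℝ)) * ∑ i ∈ Finset.range n, ξ i ω| ^ x) P ∧
    ∫ ω, |(n:ℝ) ^ (-(1/2:ℝ)) * ∑ i ∈ Finset.range n, ξ i ω| ^ x ∂P
      ≤ (900*x) ^ (x/2) * ∫ ω, |ξ 0 ω| ^ x ∂P := by
  have hx0 : (0:ℝ) < x := by linarith
  have hn0 : (0:ℝ) < (n:ℝ) := by exact_mod_cast hn
  set c : ℝ := (n:ℝ) ^ (-(1/2:ℝ)) with hc_def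
  have hc0 : 0 ≤ c := Real.rpow_nonneg hn0.le _
  have hξx : ∀ l, Integrable (fun ω => |ξ l ω| ^ x) P := fun l =>
    ((hid l).comp (aux_meas_absrpow measurable_id x)).integrable_iff.mpr hint
  have hTmeas : Measurable (fun ω => ∑ i ∈ Finset.range n, ξ i ω) :=
    Finset.measurable_sum _ fun i _ => hmeas i
  have hTint : Integrable (fun ω => |∑ i ∈ Finset.range n, ξ i ω| ^ x) P := by
    refine Integrable.mono'
      ((integrable_finset_sum (Finset.range n) (fun l _ => hξx l)).const_mul ((n:ℝ) ^ (x-1)))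
      (aux_meas_absrpow hTmeas x).aestronglyMeasurable ?_
    filter_upwards with ω
    rw [Real.norm_eq_abs, abs_of_nonneg (Real.rpow_nonneg (abs_nonneg _) _)]
    have := aux_powmean (s := Finset.range n) ⟨0, Finset.mem_range.mpr hn⟩
      (fun i => ξ i ω) (le_trans one_le_two hx)
    simpa [Finset.card_range] using this
  have hpt : ∀ ω, |c * ∑ i ∈ Finset.range n, ξ i ω| ^ x
      = c ^ x * |∑ i ∈ Finset.range n, ξ i ω| ^ x := by
    intro ω
    rw [abs_mul, Real.mul_rpow (abs_nonneg _) (abs_nonneg _), abs_of_nonneg hc0]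
  constructor
  · exact (hTint.const_mul (c ^ x)).congr (ae_of_all _ fun ω => (hpt ω).symm)
  · have hros := rosenthal_aux ξ hmeas hindep hid hcent ⌈x⌉₊ x hx (Nat.le_ceil x)
      hint (Finset.range n)
    rw [Finset.card_range] at hros
    calc ∫ ω, |c * ∑ i ∈ Finset.range n, ξ i ω| ^ x ∂P
        = c ^ x * ∫ ω, |∑ i ∈ Finset.range n, ξ i ω| ^ x ∂P := by
          rw [← integral_const_mul]
          exact integral_congr_ae (ae_of_all _ hpt)
      _ ≤ c ^ x * ((900*x) ^ (x/2) * (n:ℝ) ^ (x/2) * ∫ ω, |ξ 0 ω| ^ x ∂P) :=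
          mul_le_mul_of_nonneg_left hros (Real.rpow_nonneg hc0 x)
      _ = ((n:ℝ) ^ (-(1/2:ℝ)*x) * (n:ℝ) ^ (x/2)) * ((900*x) ^ (x/2) * ∫ ω, |ξ 0 ω| ^ x ∂P) := by
          rw [hc_def, ← Real.rpow_mul hn0.le]
          ring
      _ = (900*x) ^ (x/2) * ∫ ω, |ξ 0 ω| ^ x ∂P := by
          rw [← Real.rpow_add hn0, show -(1/2:ℝ)*x + x/2 = 0 by ring, Real.rpow_zero, one_mul]

lemma aux_factor {M mm xx pp aa u : ℝ} (hM0 : 0 ≤ M) (hmm : 0 ≤ mm) (hu : 0 < u)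
    (hxx : 2 < xx) (hpp : 0 < pp) (haa : 1 < aa) (hx_eq : xx = aa * pp)
    (hMle : M ≤ (900*xx) ^ (xx/2) * mm) :
    (M / u ^ xx) ^ (1/aa) ≤ u ^ (-pp) * (60 * (xx / Real.log xx) * mm ^ (1/xx)) ^ pp := by
  have haa0 : (0:ℝ) < aa := lt_trans one_pos haa
  have hxx0 : (0:ℝ) < xx := by linarith
  have hlog : 0 < Real.log xx := Real.log_pos (by linarith)
  have h900 : (0:ℝ) < 900 * xx := by linarith
  have hsplit : (M / u ^ xx) ^ (1/aa) = M ^ (1/aa) * u ^ (-pp) := by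
    rw [div_eq_mul_inv, ← Real.rpow_neg hu.le,
      Real.mul_rpow hM0 (Real.rpow_nonneg hu.le _), ← Real.rpow_mul hu.le]
    have hexp : -xx * (1/aa) = -pp := by
      rw [hx_eq]; field_simp
    rw [hexp]
  rw [hsplit, mul_comm (M ^ (1/aa)) _]
  apply mul_le_mul_of_nonneg_left _ (Real.rpow_nonneg hu.le _)
  have hkey : (900*xx) ^ ((1:ℝ)/2) ≤ 60 * (xx / Real.log xx) := by
    have h30 : ((900:ℝ)*xx) ^ ((1:ℝ)/2) = 30 * xx ^ ((1:ℝ)/2) := by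
      rw [Real.mul_rpow (by norm_num) hxx0.le]
      congr 1
      rw [show (900:ℝ) = 30 ^ (2:ℕ) by norm_num, ← Real.rpow_natCast 30 2,
        ← Real.rpow_mul (by norm_num : (0:ℝ) ≤ 30)]
      norm_num
    have hlogle : Real.log xx ≤ 2 * xx ^ ((1:ℝ)/2) := by
      have h := aux_log_le_two_sqrt hxx0
      rwa [Real.sqrt_eq_rpow] at h
    have hxx_split : xx ^ ((1:ℝ)/2) * xx ^ ((1:ℝ)/2) = xx := by
      rw [← Real.rpow_add hxx0]; norm_num
    rw [h30, show (60:ℝ) * (xx / Real.log xx) = (60 * xx)/Real.log xx by ring,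
      le_div_iff₀ hlog]
    calc 30 * xx ^ ((1:ℝ)/2) * Real.log xx
        ≤ 30 * xx ^ ((1:ℝ)/2) * (2 * xx ^ ((1:ℝ)/2)) := by
          apply mul_le_mul_of_nonneg_left hlogle
          positivity
      _ = 60 * (xx ^ ((1:ℝ)/2) * xx ^ ((1:ℝ)/2)) := by ring
      _ = 60 * xx := by rw [hxx_split]
  calc M ^ (1/aa) ≤ ((900*xx) ^ (xx/2) * mm) ^ (1/aa) :=
        Real.rpow_le_rpow hM0 hMle (by positivity)
    _ = (900*xx) ^ ((xx/2)*(1/aa)) * mm ^ (1/aa) := by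
        rw [Real.mul_rpow (Real.rpow_nonneg h900.le _) hmm,
          ← Real.rpow_mul h900.le]
    _ = ((900*xx) ^ ((1:ℝ)/2) * mm ^ (1/xx)) ^ pp := by
        rw [Real.mul_rpow (Real.rpow_nonneg h900.le _) (Real.rpow_nonneg hmm _),
          ← Real.rpow_mul h900.le, ← Real.rpow_mul hmm]
        congr 1
        · congr 1
          rw [hx_eq]
          field_simp
        · congr 1
          rw [hx_eq]
          field_simp
    _ ≤ (60 * (xx / Real.log xx) * mm ^ (1/xx)) ^ pp := by
        apply Real.rpow_le_rpow (by positivity) _ hpp.le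
        exact mul_le_mul_of_nonneg_right hkey (Real.rpow_nonneg hmm _)

/-- Rosenthal-type tail estimate for the minimum of normalized sums: there is an
absolute constant `C` such that for any `k` groups of i.i.d. centered random
variables (no independence between groups), with `S_n(j) = n^{−1/2} Σ_{i<n} ξ_i⁽ʲ⁾`,
`P( min_j |S_n(j)| > u ) ≤ u^{−Σ p_j} ∏_j [ C·(a_j p_j/ln(a_j p_j))·(E|ξ⁽ʲ⁾|^{a_j p_j})^{1/(a_j p_j)} ]^{p_j}`. -/
theorem rosenthal_min_tail_bound :
    ∃ C : ℝ, 0 < C ∧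
      ∀ (Ω : Type) (mΩ : MeasurableSpace Ω) (P : Measure Ω), IsProbabilityMeasure P →
        ∀ (k : ℕ), 1 ≤ k → ∀ ξ : Fin k → ℕ → Ω → ℝ,
          (∀ j i, Measurable (ξ j i)) →
          -- for each group `j` the variables are independent ...
          (∀ j, iIndepFun (fun i => ξ j i) P) →
          -- ... identically distributed ...
          (∀ j i, IdentDistrib (ξ j i) (ξ j 0) P P) →
          -- ... and centered:
          (∀ j i, ∫ ω, ξ j i ω ∂P = 0) →
          ∀ (p a : Fin k → ℝ), (∀ j, 2 ≤ p j) → (∀ j, 1 < a j) →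
            (∑ j, 1 / a j) = 1 →
            (∀ j, Integrable (fun ω => |ξ j 0 ω| ^ (a j * p j)) P) →
            ∀ n : ℕ, 1 ≤ n → ∀ u : ℝ, 0 < u →
              P {ω | ∀ j, u < |(n : ℝ) ^ (-(1 / 2 : ℝ)) * ∑ i ∈ Finset.range n, ξ j i ω|} ≤
                ENNReal.ofReal (u ^ (-(∑ j, p j)) *
                  ∏ j, (C * (a j * p j / Real.log (a j * p j)) *
                    (∫ ω, |ξ j 0 ω| ^ (a j * p j) ∂P) ^ (1 / (a j * p j))) ^ (p j)) := by
  refine ⟨60, by norm_num, ?_⟩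
  intro Ω mΩ P hP k hk ξ hmeas hindep hid hcent p a hp ha hsum hint n hn u hu
  haveI := hP
  have hp0 : ∀ j, (0:ℝ) < p j := fun j => by linarith [hp j]
  have ha0 : ∀ j, (0:ℝ) < a j := fun j => lt_trans one_pos (ha j)
  have hx2 : ∀ j, (2:ℝ) < a j * p j := by
    intro j
    calc (2:ℝ) ≤ p j := hp j
      _ = 1 * p j := (one_mul _).symm
      _ < a j * p j := mul_lt_mul_of_pos_right (ha j) (hp0 j)
  have hinva : ∀ j, (0:ℝ) < 1 / a j := fun j => by have := ha0 j; positivity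
  have hgroup := fun j => aux_group (ξ j) (hmeas j) (hindep j) (hid j) (hcent j 0)
    (le_of_lt (hx2 j)) (hint j) n hn
  have hSmeas : ∀ j, Measurable (fun ω => (n : ℝ) ^ (-(1 / 2 : ℝ)) *
      ∑ i ∈ Finset.range n, ξ j i ω) := fun j =>
    measurable_const.mul (Finset.measurable_sum _ fun i _ => hmeas j i)
  set S : Fin k → Ω → ℝ := fun j ω => (n : ℝ) ^ (-(1 / 2 : ℝ)) *
      ∑ i ∈ Finset.range n, ξ j i ω with hS_def
  set A : Fin k → Set Ω := fun j => {ω | u < |S j ω|} with hA_def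
  have hAmeas : ∀ j, MeasurableSet (A j) := fun j =>
    measurableSet_lt measurable_const (hSmeas j).abs
  have hmarkov : ∀ j, P (A j) ≤ ENNReal.ofReal
      ((∫ ω, |S j ω| ^ (a j * p j) ∂P) / u ^ (a j * p j)) := fun j =>
    aux_markov (by linarith [hx2 j]) hu (hgroup j).1
  -- Hölder step
  have hHolder : P {ω | ∀ j, u < |S j ω|} ≤ ∏ j, (P (A j)) ^ (1/(a j)) := by
    have h1 := ENNReal.lintegral_prod_norm_pow_le (μ := P) Finset.univ
      (f := fun j => (A j).indicator (fun _ => (1:ℝ≥0∞)))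
      (fun j _ => (measurable_one.indicator (hAmeas j)).aemeasurable)
      (p := fun j => 1 / a j) hsum (fun j _ => (hinva j).le)
    have hpt : ∀ ω, ∏ j, ((A j).indicator (fun _ => (1:ℝ≥0∞)) ω) ^ (1/(a j))
        = ({ω | ∀ j, u < |S j ω|} : Set Ω).indicator (fun _ => (1:ℝ≥0∞)) ω := by
      intro ω
      by_cases hω : ∀ j, u < |S j ω|
      · rw [Set.indicator_of_mem (show ω ∈ {ω | ∀ j, u < |S j ω|} from hω)]
        refine Finset.prod_eq_one fun j _ => ?_
        rw [Set.indicator_of_mem (show ω ∈ A j from hω j), ENNReal.one_rpow]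
      · rw [Set.indicator_of_notMem (show ω ∉ {ω | ∀ j, u < |S j ω|} from hω)]
        obtain ⟨j0, hj0⟩ := not_forall.mp hω
        refine Finset.prod_eq_zero (Finset.mem_univ j0) ?_
        rw [Set.indicator_of_notMem (show ω ∉ A j0 from hj0),
          ENNReal.zero_rpow_of_pos (hinva j0)]
    have hsetmeas : MeasurableSet {ω | ∀ j, u < |S j ω|} := by
      rw [Set.setOf_forall]
      exact MeasurableSet.iInter fun j => hAmeas j
    calc P {ω | ∀ j, u < |S j ω|}
        = ∫⁻ ω, ({ω | ∀ j, u < |S j ω|} : Set Ω).indicator (fun _ => (1:ℝ≥0∞)) ω ∂P :=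
          (lintegral_indicator_one hsetmeas).symm
      _ = ∫⁻ ω, ∏ j, ((A j).indicator (fun _ => (1:ℝ≥0∞)) ω) ^ (1/(a j)) ∂P := by
          exact lintegral_congr fun ω => (hpt ω).symm
      _ ≤ ∏ j, (∫⁻ ω, (A j).indicator (fun _ => (1:ℝ≥0∞)) ω ∂P) ^ (1/(a j)) := h1
      _ = ∏ j, (P (A j)) ^ (1/(a j)) := by
          exact Finset.prod_congr rfl fun j _ => by
            rw [show ((A j).indicator (fun _ => (1:ℝ≥0∞))) = (A j).indicator 1 from rfl,
              lintegral_indicator_one (hAmeas j)]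
  have hm0 : ∀ j, (0:ℝ) ≤ ∫ ω, |ξ j 0 ω| ^ (a j * p j) ∂P :=
    fun j => integral_nonneg fun ω => Real.rpow_nonneg (abs_nonneg _) _
  have hM0 : ∀ j, (0:ℝ) ≤ ∫ ω, |S j ω| ^ (a j * p j) ∂P :=
    fun j => integral_nonneg fun ω => Real.rpow_nonneg (abs_nonneg _) _
  have hdiv0 : ∀ j, (0:ℝ) ≤ (∫ ω, |S j ω| ^ (a j * p j) ∂P) / u ^ (a j * p j) :=
    fun j => div_nonneg (hM0 j) (Real.rpow_nonneg hu.le _)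
  calc P {ω | ∀ j, u < |S j ω|}
      ≤ ∏ j, (P (A j)) ^ (1/(a j)) := hHolder
    _ ≤ ∏ j, (ENNReal.ofReal ((∫ ω, |S j ω| ^ (a j * p j) ∂P) / u ^ (a j * p j))) ^ (1/(a j)) :=
        Finset.prod_le_prod' fun j _ => ENNReal.rpow_le_rpow (hmarkov j) (hinva j).le
    _ = ∏ j, ENNReal.ofReal (((∫ ω, |S j ω| ^ (a j * p j) ∂P) / u ^ (a j * p j)) ^ (1/(a j))) := by
        refine Finset.prod_congr rfl fun j _ => ?_
        rw [ENNReal.ofReal_rpow_of_nonneg (hdiv0 j) (hinva j).le]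
    _ = ENNReal.ofReal (∏ j, ((∫ ω, |S j ω| ^ (a j * p j) ∂P) / u ^ (a j * p j)) ^ (1/(a j))) := by
        rw [ENNReal.ofReal_prod_of_nonneg fun j _ => Real.rpow_nonneg (hdiv0 j) _]
    _ ≤ ENNReal.ofReal (u ^ (-(∑ j, p j)) *
          ∏ j, (60 * (a j * p j / Real.log (a j * p j)) *
            (∫ ω, |ξ j 0 ω| ^ (a j * p j) ∂P) ^ (1 / (a j * p j))) ^ (p j)) := by
        apply ENNReal.ofReal_le_ofReal
        have hfac : ∀ j, ((∫ ω, |S j ω| ^ (a j * p j) ∂P) / u ^ (a j * p j)) ^ (1/(a j))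
            ≤ u ^ (-(p j)) * (60 * (a j * p j / Real.log (a j * p j)) *
              (∫ ω, |ξ j 0 ω| ^ (a j * p j) ∂P) ^ (1 / (a j * p j))) ^ (p j) := fun j =>
          aux_factor (hM0 j) (hm0 j) hu (hx2 j) (hp0 j) (ha j) rfl (hgroup j).2
        calc ∏ j, ((∫ ω, |S j ω| ^ (a j * p j) ∂P) / u ^ (a j * p j)) ^ (1/(a j))
            ≤ ∏ j, (u ^ (-(p j)) * (60 * (a j * p j / Real.log (a j * p j)) *
                (∫ ω, |ξ j 0 ω| ^ (a j * p j) ∂P) ^ (1 / (a j * p j))) ^ (p j)) :=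
              Finset.prod_le_prod (fun j _ => Real.rpow_nonneg (hdiv0 j) _)
                (fun j _ => hfac j)
          _ = (∏ j, u ^ (-(p j))) * ∏ j, (60 * (a j * p j / Real.log (a j * p j)) *
                (∫ ω, |ξ j 0 ω| ^ (a j * p j) ∂P) ^ (1 / (a j * p j))) ^ (p j) := by
              rw [Finset.prod_mul_distrib]
          _ = u ^ (-(∑ j, p j)) * ∏ j, (60 * (a j * p j / Real.log (a j * p j)) *
                (∫ ω, |ξ j 0 ω| ^ (a j * p j) ∂P) ^ (1 / (a j * p j))) ^ (p j) := by
              congr 1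
              simp_rw [Real.rpow_def_of_pos hu]
              rw [← Real.exp_sum, ← Finset.mul_sum]
              congr 1
              rw [Finset.sum_neg_distrib]
end Main
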